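/- arXiv:1408.6719 — 2 statements merged into one kernel-verified Lean document; each statement's English description precedes it below -/
import Mathlib

section
/- Let K, L be star bodies about the origin in ℝ^n and φ ∈ Φ. Then O_φ(K,L) ≥ (V(K)/V(L))^{1/n}, with equality if and only if K and L are dilates. -/
open MeasureTheory Metric Set
open scoped ENNReal NNReal

noncomputable section

/-- The radial function of a set: `ρ_K x = sup {r ≥ 0 : r • x ∈ K}`. -/
def radialFn {n : ℕ} (K : Set (EuclideanSpace ℝ (Fin n))) (x : EuclideanSpace ℝ (Fin n)) : ℝ :=
  sSup {r : ℝ | 0 ≤ r ∧ r • x ∈ K}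

/-- A star body about the origin: compact, with `0` in its interior, star-shaped
with respect to the origin, and with continuous radial function on the sphere. -/
def IsStarBody {n : ℕ} (K : Set (EuclideanSpace ℝ (Fin n))) : Prop :=
  IsCompact K ∧ (0 : EuclideanSpace ℝ (Fin n)) ∈ interior K ∧
    (∀ x ∈ K, ∀ t : ℝ, t ∈ Icc (0 : ℝ) 1 → t • x ∈ K) ∧
    Continuous fun u : sphere (0 : EuclideanSpace ℝ (Fin n)) 1 => radialFn K u

theorem starBody_radial {n : ℕ} {K : Set (EuclideanSpace ℝ (Fin n))} (hK : IsStarBody K)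
    {u : EuclideanSpace ℝ (Fin n)} (hu : ‖u‖ = 1) :
    0 < radialFn K u ∧ ∀ r : ℝ, 0 ≤ r → (r • u ∈ K ↔ r ≤ radialFn K u) := by
  obtain ⟨hKc, hK0, hKs, _⟩ := hK
  have h0K : (0 : EuclideanSpace ℝ (Fin n)) ∈ K := interior_subset hK0
  have h0A : (0:ℝ) ∈ {r : ℝ | 0 ≤ r ∧ r • u ∈ K} := ⟨le_refl 0, by simpa using h0K⟩
  obtain ⟨R, hR⟩ := hKc.isBounded.subset_closedBall 0
  have hbdd : BddAbove {r : ℝ | 0 ≤ r ∧ r • u ∈ K} := by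
    refine ⟨R, fun r hr => ?_⟩
    have := mem_closedBall_zero_iff.1 (hR hr.2)
    simpa [norm_smul, hu, abs_of_nonneg hr.1] using this
  have hclosed : IsClosed {r : ℝ | 0 ≤ r ∧ r • u ∈ K} := by
    have he : {r : ℝ | 0 ≤ r ∧ r • u ∈ K} = Ici (0:ℝ) ∩ (fun r : ℝ => r • u) ⁻¹' K := rfl
    rw [he]
    exact isClosed_Ici.inter (hKc.isClosed.preimage (by continuity))
  have hmem : radialFn K u ∈ {r : ℝ | 0 ≤ r ∧ r • u ∈ K} :=
    hclosed.csSup_mem ⟨0, h0A⟩ hbdd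
  have hpos : 0 < radialFn K u := by
    obtain ⟨ε, hε, hball⟩ := Metric.mem_nhds_iff.1 (mem_interior_iff_mem_nhds.1 hK0)
    have hmem' : (ε/2 : ℝ) ∈ {r : ℝ | 0 ≤ r ∧ r • u ∈ K} := by
      refine ⟨by positivity, hball ?_⟩
      simp [mem_ball_zero_iff, norm_smul, hu, abs_of_pos hε]
      linarith
    have hsup : ε/2 ≤ radialFn K u := le_csSup hbdd hmem'
    linarith
  refine ⟨hpos, fun r hr => ⟨fun h => le_csSup hbdd ⟨hr, h⟩, fun h => ?_⟩⟩
  have he : r • u = (r / radialFn K u) • (radialFn K u • u) := by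
    rw [smul_smul, div_mul_cancel₀ _ hpos.ne']
  rw [he]
  exact hKs _ hmem.2 _ ⟨div_nonneg hr hpos.le, (div_le_one hpos).2 h⟩

/-- The spherical Lebesgue measure on the unit sphere `S^{n-1}`. -/
def sphereMeasure (n : ℕ) : Measure (sphere (0 : EuclideanSpace ℝ (Fin n)) 1) :=
  (volume : Measure (EuclideanSpace ℝ (Fin n))).toSphere


theorem volumeIoiPow_Iic {m : ℕ} {a : ℝ} (ha : 0 < a) :
    Measure.volumeIoiPow m {r : Ioi (0:ℝ) | (r:ℝ) ≤ a} = ENNReal.ofReal (a ^ (m+1) / (m+1)) := by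
  have hset : {r : Ioi (0:ℝ) | (r:ℝ) ≤ a} = Iio (⟨a, ha⟩ : Ioi (0:ℝ)) ∪ {(⟨a, ha⟩ : Ioi (0:ℝ))} := by
    ext r
    simp only [mem_setOf_eq, mem_union, mem_Iio, mem_singleton_iff]
    constructor
    · intro h
      rcases lt_or_eq_of_le h with h | h
      · exact Or.inl (by exact_mod_cast h)
      · exact Or.inr (Subtype.ext h)
    · rintro (h | h)
      · exact le_of_lt (by exact_mod_cast h)
      · rw [h]
  have hnull : Measure.volumeIoiPow m {(⟨a, ha⟩ : Ioi (0:ℝ))} = 0 := by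
    rw [Measure.volumeIoiPow, withDensity_apply _ (measurableSet_singleton _)]
    have h0 : (volume.comap (Subtype.val : Ioi (0:ℝ) → ℝ)) {(⟨a, ha⟩ : Ioi (0:ℝ))} = 0 := by
      rw [_root_.comap_subtype_coe_apply measurableSet_Ioi]
      simp
    exact setLIntegral_measure_zero _ _ h0
  rw [hset]
  have hle := le_antisymm ((measure_union_le (Iio (⟨a, ha⟩ : Ioi (0:ℝ))) {(⟨a, ha⟩ : Ioi (0:ℝ))}).trans
      (by rw [hnull, add_zero])) (measure_mono subset_union_left)
  rw [hle, Measure.volumeIoiPow_apply_Iio]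

theorem polar_lintegral {n : ℕ} (hn : 0 < n) {K : Set (EuclideanSpace ℝ (Fin n))}
    (hK : IsStarBody K) :
    ∫⁻ u : sphere (0 : EuclideanSpace ℝ (Fin n)) 1,
      ENNReal.ofReal ((radialFn K u) ^ n / n) ∂(sphereMeasure n) = volume K := by
  haveI : Nontrivial (EuclideanSpace ℝ (Fin n)) :=
    Module.nontrivial_of_finrank_pos (R := ℝ) (by rw [finrank_euclideanSpace_fin]; exact hn)
  have hdim : Module.finrank ℝ (EuclideanSpace ℝ (Fin n)) = n := finrank_euclideanSpace_fin
  set s : Set (sphere (0 : EuclideanSpace ℝ (Fin n)) 1 × Ioi (0:ℝ)) :=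
    {p | (p.2 : ℝ) ≤ radialFn K p.1} with hsdef
  have hs : MeasurableSet s := by
    have : IsClosed s :=
      isClosed_le (continuous_subtype_val.comp continuous_snd) (hK.2.2.2.comp continuous_fst)
    exact this.measurableSet
  have hpre : (homeomorphUnitSphereProd (EuclideanSpace ℝ (Fin n))) ⁻¹' s
      = Subtype.val ⁻¹' K := by
    ext x
    have hx : (x : EuclideanSpace ℝ (Fin n)) ≠ 0 := x.2
    have hu1 : ‖(‖(x:EuclideanSpace ℝ (Fin n))‖⁻¹ • (x:EuclideanSpace ℝ (Fin n)))‖ = 1 := by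
      rw [norm_smul, norm_inv, norm_norm, inv_mul_cancel₀ (norm_ne_zero_iff.2 hx)]
    have hchar := (starBody_radial hK hu1).2 ‖(x:EuclideanSpace ℝ (Fin n))‖ (norm_nonneg _)
    rw [smul_inv_smul₀ (norm_ne_zero_iff.2 hx)] at hchar
    simp only [mem_preimage, hsdef, mem_setOf_eq, homeomorphUnitSphereProd_apply_fst_coe,
      homeomorphUnitSphereProd_apply_snd_coe]
    exact hchar.symm
  have hc : ((n - 1 : ℕ) : ℝ) + 1 = (n : ℝ) := by
    have h := Nat.sub_add_cancel hn
    exact_mod_cast congrArg (Nat.cast (R := ℝ)) h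
  calc ∫⁻ u : sphere (0 : EuclideanSpace ℝ (Fin n)) 1,
        ENNReal.ofReal ((radialFn K u) ^ n / n) ∂(sphereMeasure n)
      = ∫⁻ u : sphere (0 : EuclideanSpace ℝ (Fin n)) 1,
        Measure.volumeIoiPow (n-1) {r : Ioi (0:ℝ) | (r:ℝ) ≤ radialFn K u}
          ∂(sphereMeasure n) := by
        refine lintegral_congr fun u => ?_
        have hu1 : ‖(u : EuclideanSpace ℝ (Fin n))‖ = 1 := mem_sphere_zero_iff_norm.1 u.2
        rw [volumeIoiPow_Iic (starBody_radial hK hu1).1, Nat.sub_add_cancel hn, hc]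
    _ = (volume.toSphere.prod (Measure.volumeIoiPow
          (Module.finrank ℝ (EuclideanSpace ℝ (Fin n)) - 1))) s := by
        rw [hdim, Measure.prod_apply hs]; rfl
    _ = (volume.comap (Subtype.val : ({0}ᶜ : Set (EuclideanSpace ℝ (Fin n))) →
          EuclideanSpace ℝ (Fin n))) (Subtype.val ⁻¹' K) := by
        rw [← hpre]
        exact ((Measure.measurePreserving_homeomorphUnitSphereProd volume).measure_preimage
          hs.nullMeasurableSet).symm
    _ = volume K := by
        rw [_root_.comap_subtype_coe_apply (measurableSet_singleton
          (0 : EuclideanSpace ℝ (Fin n))).compl, Subtype.image_preimage_coe]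
        rw [show ({0}ᶜ : Set (EuclideanSpace ℝ (Fin n))) ∩ K = K \ {0} by
          rw [diff_eq, inter_comm]]
        exact measure_diff_null (measure_singleton _)

theorem starBody_volume_pos {n : ℕ} {K : Set (EuclideanSpace ℝ (Fin n))} (hK : IsStarBody K) :
    0 < (volume K).toReal := by
  refine ENNReal.toReal_pos (fun h0 => ?_) hK.1.measure_lt_top.ne
  have : (0:ℝ≥0∞) < volume (interior K) :=
    isOpen_interior.measure_pos volume ⟨0, hK.2.1⟩
  exact absurd (le_antisymm (h0 ▸ measure_mono interior_subset) (zero_le)) this.ne'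

instance sphereMeasure_finite (n : ℕ) : IsFiniteMeasure (sphereMeasure n) := by
  unfold sphereMeasure; infer_instance

theorem integrable_sphere {n : ℕ} {μ : Measure (sphere (0 : EuclideanSpace ℝ (Fin n)) 1)}
    [IsFiniteMeasure μ] {f : sphere (0 : EuclideanSpace ℝ (Fin n)) 1 → ℝ}
    (hf : Continuous f) : Integrable f μ :=
  hf.integrable_of_hasCompactSupport (HasCompactSupport.of_compactSpace f)

theorem polar_integral {n : ℕ} (hn : 0 < n) {K : Set (EuclideanSpace ℝ (Fin n))}
    (hK : IsStarBody K) :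
    ∫ u, (radialFn K u) ^ n ∂(sphereMeasure n) = n * (volume K).toReal := by
  have hcont : Continuous fun u : sphere (0 : EuclideanSpace ℝ (Fin n)) 1 =>
      (radialFn K u) ^ n := hK.2.2.2.pow n
  have hnn : ∀ u : sphere (0 : EuclideanSpace ℝ (Fin n)) 1, 0 ≤ (radialFn K u) ^ n :=
    fun u => pow_nonneg (starBody_radial hK (mem_sphere_zero_iff_norm.1 u.2)).1.le n
  have hint : Integrable (fun u : sphere (0 : EuclideanSpace ℝ (Fin n)) 1 =>
      (radialFn K u) ^ n) (sphereMeasure n) := integrable_sphere hcont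
  have hof : ENNReal.ofReal (∫ u, (radialFn K u) ^ n ∂(sphereMeasure n))
      = ∫⁻ u, ENNReal.ofReal ((radialFn K u) ^ n) ∂(sphereMeasure n) :=
    ofReal_integral_eq_lintegral_ofReal hint (Filter.Eventually.of_forall hnn)
  have hlin : ∫⁻ u, ENNReal.ofReal ((radialFn K u) ^ n) ∂(sphereMeasure n)
      = ENNReal.ofReal n * volume K := by
    rw [← polar_lintegral hn hK, ← lintegral_const_mul' _ _ ENNReal.ofReal_ne_top]
    refine lintegral_congr fun u => ?_
    rw [← ENNReal.ofReal_mul (by positivity : (0:ℝ) ≤ (n:ℝ))]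
    congr 1
    field_simp
  have := hof.trans hlin
  have h2 := congrArg ENNReal.toReal this
  rw [ENNReal.toReal_ofReal (integral_nonneg hnn), ENNReal.toReal_mul,
    ENNReal.toReal_ofReal (by positivity : (0:ℝ) ≤ (n:ℝ))] at h2
  exact h2

/-- The normalized dual conical measure `dV_K^* = ρ_K^n/(n V(K)) dS`. -/
def normDualConical (n : ℕ) (K : Set (EuclideanSpace ℝ (Fin n))) :
    Measure (sphere (0 : EuclideanSpace ℝ (Fin n)) 1) :=
  (sphereMeasure n).withDensity fun u =>
    ENNReal.ofReal ((radialFn K u) ^ n / (n * (volume K).toReal))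

theorem normDualConical_prob {n : ℕ} (hn : 0 < n) {K : Set (EuclideanSpace ℝ (Fin n))}
    (hK : IsStarBody K) : IsProbabilityMeasure (normDualConical n K) := by
  constructor
  have hV := starBody_volume_pos hK
  rw [normDualConical, withDensity_apply _ MeasurableSet.univ, Measure.restrict_univ]
  have hpt : ∀ u : sphere (0 : EuclideanSpace ℝ (Fin n)) 1,
      ENNReal.ofReal ((radialFn K u) ^ n / (n * (volume K).toReal))
        = ENNReal.ofReal ((radialFn K u) ^ n / n) * ENNReal.ofReal (((volume K).toReal)⁻¹) := by
    intro u
    have hρ := (starBody_radial hK (mem_sphere_zero_iff_norm.1 u.2)).1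
    rw [← ENNReal.ofReal_mul (by positivity)]
    congr 1
    rw [← div_div, div_eq_mul_inv]
  calc ∫⁻ u, ENNReal.ofReal ((radialFn K u) ^ n / (n * (volume K).toReal)) ∂(sphereMeasure n)
      = ∫⁻ u, ENNReal.ofReal ((radialFn K u) ^ n / n)
          * ENNReal.ofReal (((volume K).toReal)⁻¹) ∂(sphereMeasure n) :=
        lintegral_congr hpt
    _ = volume K * ENNReal.ofReal (((volume K).toReal)⁻¹) := by
        rw [lintegral_mul_const' _ _ ENNReal.ofReal_ne_top, polar_lintegral hn hK]
    _ = ENNReal.ofReal ((volume K).toReal) * ENNReal.ofReal (((volume K).toReal)⁻¹) := by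
        rw [ENNReal.ofReal_toReal hK.1.measure_lt_top.ne]
    _ = 1 := by rw [← ENNReal.ofReal_mul hV.le, mul_inv_cancel₀ hV.ne', ENNReal.ofReal_one]

theorem normDualConical_integral {n : ℕ} {K : Set (EuclideanSpace ℝ (Fin n))}
    (hK : IsStarBody K) (g : sphere (0 : EuclideanSpace ℝ (Fin n)) 1 → ℝ) :
    ∫ u, g u ∂(normDualConical n K)
      = ∫ u, ((radialFn K u) ^ n / (n * (volume K).toReal)) * g u ∂(sphereMeasure n) := by
  have hd : Continuous fun u : sphere (0 : EuclideanSpace ℝ (Fin n)) 1 =>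
      (radialFn K u) ^ n / (n * (volume K).toReal) := (hK.2.2.2.pow n).div_const _
  have hm : Measurable fun u : sphere (0 : EuclideanSpace ℝ (Fin n)) 1 =>
      Real.toNNReal ((radialFn K u) ^ n / (n * (volume K).toReal)) :=
    hd.measurable.real_toNNReal
  have hrw : normDualConical n K = (sphereMeasure n).withDensity fun u =>
      ((Real.toNNReal ((radialFn K u) ^ n / (n * (volume K).toReal)) : ℝ≥0) : ℝ≥0∞) := rfl
  rw [hrw, integral_withDensity_eq_integral_smul hm g]
  refine integral_congr_ae (Filter.Eventually.of_forall fun u => ?_)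
  have hnn : 0 ≤ (radialFn K u) ^ n / (n * (volume K).toReal) := by
    have := (starBody_radial hK (mem_sphere_zero_iff_norm.1 u.2)).1
    positivity
  simp only [NNReal.smul_def, Real.coe_toNNReal _ hnn, smul_eq_mul]

/-- `O_φ(K,L) = inf {t > 0 : ∫ φ (ρ_K/(t ρ_L)) dV_K^* ≤ φ 1}`
(equivalently, `φ⁻¹ (∫ φ (ρ_K/(t ρ_L)) dV_K^*) ≤ 1`). -/
def Ofun (n : ℕ) (φ : ℝ → ℝ) (K L : Set (EuclideanSpace ℝ (Fin n))) : ℝ :=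
  sInf {t : ℝ | 0 < t ∧
    ∫ u, φ (radialFn K u / (t * radialFn L u)) ∂(normDualConical n K) ≤ φ 1}

open scoped Pointwise

theorem radialFn_smul {n : ℕ} {L : Set (EuclideanSpace ℝ (Fin n))} (hL : IsStarBody L)
    {c : ℝ} (hc : 0 < c) {u : EuclideanSpace ℝ (Fin n)} (hu : ‖u‖ = 1) :
    radialFn (c • L) u = c * radialFn L u := by
  have hchar := (starBody_radial hL hu).2
  have hpos := (starBody_radial hL hu).1
  have hset : {r : ℝ | 0 ≤ r ∧ r • u ∈ c • L} = Icc 0 (c * radialFn L u) := by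
    ext r
    simp only [mem_setOf_eq, mem_Icc]
    constructor
    · rintro ⟨hr, hm⟩
      refine ⟨hr, ?_⟩
      have h1 : c⁻¹ • (r • u) ∈ L := (mem_smul_set_iff_inv_smul_mem₀ hc.ne' _ _).1 hm
      rw [smul_smul] at h1
      have h2 := (hchar _ (by positivity)).1 h1
      calc r = c * (c⁻¹ * r) := by field_simp
        _ ≤ c * radialFn L u := by nlinarith
    · rintro ⟨h0, h1⟩
      refine ⟨h0, ?_⟩
      have h2 : (c⁻¹ * r) • u ∈ L := by
        refine (hchar _ (by positivity)).2 ?_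
        rw [inv_mul_le_iff₀ hc]
        linarith [h1]
      have h3 : r • u = c • ((c⁻¹ * r) • u) := by
        rw [smul_smul, ← mul_assoc, mul_inv_cancel₀ hc.ne', one_mul]
      rw [h3]
      exact smul_mem_smul_set h2
  rw [radialFn, hset, csSup_Icc (by positivity)]

theorem starBody_eq_smul {n : ℕ} {K L : Set (EuclideanSpace ℝ (Fin n))}
    (hK : IsStarBody K) (hL : IsStarBody L) {c : ℝ} (hc : 0 < c)
    (h : ∀ u : EuclideanSpace ℝ (Fin n), ‖u‖ = 1 → radialFn K u = c * radialFn L u) :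
    K = c • L := by
  ext x
  by_cases hx : x = 0
  · subst hx
    simp only [interior_subset hK.2.1, true_iff]
    exact ⟨0, interior_subset hL.2.1, smul_zero c⟩
  · have hxn : ‖x‖ ≠ 0 := norm_ne_zero_iff.2 hx
    have hu : ‖(‖x‖⁻¹ • x)‖ = 1 := by
      rw [norm_smul, norm_inv, norm_norm, inv_mul_cancel₀ hxn]
    have hxu : ‖x‖ • (‖x‖⁻¹ • x) = x := smul_inv_smul₀ hxn _
    have hKc := (starBody_radial hK hu).2 ‖x‖ (norm_nonneg x)
    rw [hxu] at hKc
    have hLc := (starBody_radial hL hu).2 (c⁻¹ * ‖x‖) (by positivity)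
    have key : c⁻¹ • x = (c⁻¹ * ‖x‖) • (‖x‖⁻¹ • x) := by
      rw [smul_smul, mul_assoc, mul_inv_cancel₀ hxn, mul_one]
    constructor
    · intro hxK
      rw [mem_smul_set_iff_inv_smul_mem₀ hc.ne', key, hLc]
      have h1 := hKc.1 hxK
      rw [h _ hu] at h1
      rw [inv_mul_le_iff₀ hc]
      linarith
    · intro hxL
      rw [mem_smul_set_iff_inv_smul_mem₀ hc.ne', key, hLc] at hxL
      refine hKc.2 ?_
      rw [h _ hu]
      rw [inv_mul_le_iff₀ hc] at hxL
      linarith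

theorem strictConvexOn_zpow_neg {n : ℕ} (hn : 0 < n) {a b : ℝ} (ha : 0 < a) :
    StrictConvexOn ℝ (Icc a b) (fun x : ℝ => x ^ (-(n:ℤ))) := by
  apply strictConvexOn_of_deriv2_pos (convex_Icc a b)
  · intro x hx
    exact (continuousAt_zpow₀ x _ (Or.inl (ne_of_gt (lt_of_lt_of_le ha hx.1)))).continuousWithinAt
  · intro x hx
    rw [interior_Icc, mem_Ioo] at hx
    have hx0 : 0 < x := lt_trans ha hx.1
    rw [iter_deriv_zpow]
    have hprod : (∏ i ∈ Finset.range 2, ((↑(-(n:ℤ)) : ℝ) - i)) = (n:ℝ) * ((n:ℝ)+1) := by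
      simp [Finset.prod_range_succ]
      ring
    rw [hprod]
    exact mul_pos (mul_pos (by exact_mod_cast hn) (by positivity)) (zpow_pos hx0 _)

theorem sphereMeasure_open_pos {n : ℕ} (hn : 0 < n)
    {U : Set (sphere (0 : EuclideanSpace ℝ (Fin n)) 1)} (hU : IsOpen U) (hne : U.Nonempty) :
    0 < sphereMeasure n U := by
  haveI : Nontrivial (EuclideanSpace ℝ (Fin n)) :=
    Module.nontrivial_of_finrank_pos (R := ℝ) (by rw [finrank_euclideanSpace_fin]; exact hn)
  have hdim : Module.finrank ℝ (EuclideanSpace ℝ (Fin n)) = n := finrank_euclideanSpace_fin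
  have hIio : IsOpen (Iio (⟨1, mem_Ioi.2 one_pos⟩ : Ioi (0:ℝ))) := by
    have h1 : (Iio (⟨1, mem_Ioi.2 one_pos⟩ : Ioi (0:ℝ)))
        = Subtype.val ⁻¹' (Iio (1:ℝ)) := by
      ext r; simp [← Subtype.coe_lt_coe]
    rw [h1]
    exact isOpen_Iio.preimage continuous_subtype_val
  have hopen : IsOpen ((Subtype.val : ({0}ᶜ : Set (EuclideanSpace ℝ (Fin n))) →
      EuclideanSpace ℝ (Fin n)) ''
      ((homeomorphUnitSphereProd (EuclideanSpace ℝ (Fin n))) ⁻¹'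
        (U ×ˢ Iio (⟨1, mem_Ioi.2 one_pos⟩ : Ioi (0:ℝ))))) :=
    (isOpen_compl_singleton).isOpenMap_subtype_val _
      ((hU.prod hIio).preimage (homeomorphUnitSphereProd _).continuous)
  have hne' : ((Subtype.val : ({0}ᶜ : Set (EuclideanSpace ℝ (Fin n))) →
      EuclideanSpace ℝ (Fin n)) ''
      ((homeomorphUnitSphereProd (EuclideanSpace ℝ (Fin n))) ⁻¹'
        (U ×ˢ Iio (⟨1, mem_Ioi.2 one_pos⟩ : Ioi (0:ℝ))))).Nonempty := by
    obtain ⟨u₀, hu₀⟩ := hne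
    refine ⟨Subtype.val ((homeomorphUnitSphereProd (EuclideanSpace ℝ (Fin n))).symm
      (u₀, ⟨1/2, mem_Ioi.2 (by norm_num)⟩)), mem_image_of_mem _ ?_⟩
    rw [mem_preimage, Homeomorph.apply_symm_apply]
    refine ⟨hu₀, ?_⟩
    rw [mem_Iio, ← Subtype.coe_lt_coe]
    norm_num
  have hvol : 0 < volume ((Subtype.val : ({0}ᶜ : Set (EuclideanSpace ℝ (Fin n))) →
      EuclideanSpace ℝ (Fin n)) ''
      ((homeomorphUnitSphereProd (EuclideanSpace ℝ (Fin n))) ⁻¹'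
        (U ×ˢ Iio (⟨1, mem_Ioi.2 one_pos⟩ : Ioi (0:ℝ))))) := hopen.measure_pos volume hne'
  rw [Measure.toSphere_apply_aux] at hvol
  have happ := Measure.toSphere_apply' (volume : Measure (EuclideanSpace ℝ (Fin n)))
    hU.measurableSet
  rw [sphereMeasure, happ, hdim]
  exact ENNReal.mul_pos (by exact_mod_cast hn.ne') hvol.ne'

set_option maxHeartbeats 1000000 in
/-- For star bodies `K, L` about the origin and `φ ∈ Φ`:
`O_φ(K,L) ≥ (V(K)/V(L))^{1/n}`, with equality iff `K` and `L` are dilates. -/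
theorem Ofun_ge
    (n : ℕ) (hn : 0 < n) (K L : Set (EuclideanSpace ℝ (Fin n)))
    (hK : IsStarBody K) (hL : IsStarBody L) (φ : ℝ → ℝ)
    (hφconv : ConvexOn ℝ (Ici (0 : ℝ)) φ)
    (hφmono : StrictMonoOn φ (Ici (0 : ℝ)))
    (hφ0 : φ 0 = 0) :
    ((volume K).toReal / (volume L).toReal) ^ ((1 : ℝ) / n) ≤ Ofun n φ K L ∧
      (Ofun n φ K L = ((volume K).toReal / (volume L).toReal) ^ ((1 : ℝ) / n) ↔
        ∃ c : ℝ, 0 < c ∧ K = c • L) := by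
  haveI : Nontrivial (EuclideanSpace ℝ (Fin n)) :=
    Module.nontrivial_of_finrank_pos (R := ℝ) (by rw [finrank_euclideanSpace_fin]; exact hn)
  haveI : Nonempty (sphere (0 : EuclideanSpace ℝ (Fin n)) 1) :=
    (NormedSpace.sphere_nonempty.mpr zero_le_one).to_subtype
  haveI hprob : IsProbabilityMeasure (normDualConical n K) := normDualConical_prob hn hK
  have hVK : 0 < (volume K).toReal := starBody_volume_pos hK
  have hVL : 0 < (volume L).toReal := starBody_volume_pos hL
  have hρK : ∀ u : sphere (0 : EuclideanSpace ℝ (Fin n)) 1, 0 < radialFn K u :=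
    fun u => (starBody_radial hK (mem_sphere_zero_iff_norm.1 u.2)).1
  have hρL : ∀ u : sphere (0 : EuclideanSpace ℝ (Fin n)) 1, 0 < radialFn L u :=
    fun u => (starBody_radial hL (mem_sphere_zero_iff_norm.1 u.2)).1
  set g : sphere (0 : EuclideanSpace ℝ (Fin n)) 1 → ℝ :=
    fun u => radialFn K u / radialFn L u with hgdef
  have hgcont : Continuous g := (hK.2.2.2).div (hL.2.2.2) fun u => (hρL u).ne'
  have hgpos : ∀ u, 0 < g u := fun u => div_pos (hρK u) (hρL u)
  obtain ⟨ua, -, hua'⟩ := isCompact_univ.exists_isMinOn univ_nonempty hgcont.continuousOn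
  obtain ⟨ub, -, hub'⟩ := isCompact_univ.exists_isMaxOn univ_nonempty hgcont.continuousOn
  have hua : ∀ y, g ua ≤ g y := fun y => hua' (mem_univ y)
  have hub : ∀ y, g y ≤ g ub := fun y => hub' (mem_univ y)
  set a := g ua with hadef
  set b := g ub with hbdef
  have ha : 0 < a := hgpos ua
  have hb : 0 < b := hgpos ub
  have hgmem : ∀ u, g u ∈ Icc a b := fun u => ⟨hua u, hub u⟩
  set ψ : ℝ → ℝ := fun x => x ^ (-(n:ℤ)) with hψdef
  have hψconv : StrictConvexOn ℝ (Icc a b) ψ := strictConvexOn_zpow_neg hn ha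
  have hψcont : ContinuousOn ψ (Icc a b) := fun x hx =>
    (continuousAt_zpow₀ x _ (Or.inl (ha.trans_le hx.1).ne')).continuousWithinAt
  have hgi : Integrable g (normDualConical n K) := integrable_sphere hgcont
  have hψgcont : Continuous (ψ ∘ g) := hψcont.comp_continuous hgcont hgmem
  have hψgi : Integrable (ψ ∘ g) (normDualConical n K) := integrable_sphere hψgcont
  have hgae : ∀ᵐ u ∂(normDualConical n K), g u ∈ Icc a b :=
    Filter.Eventually.of_forall hgmem
  set m := ∫ u, g u ∂(normDualConical n K) with hmdef
  have hepi := (hψconv.convexOn).average_mem_epigraph hψcont isClosed_Icc hgae hgi hψgi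
  rw [average_eq_integral, average_eq_integral] at hepi
  obtain ⟨hm_mem, hJ⟩ := hepi
  have hI1 : ∫ u, ψ (g u) ∂(normDualConical n K)
      = (volume L).toReal / (volume K).toReal := by
    rw [normDualConical_integral hK (fun u => ψ (g u))]
    have hpt : ∀ u : sphere (0 : EuclideanSpace ℝ (Fin n)) 1,
        radialFn K u ^ n / (n * (volume K).toReal) * ψ (g u)
        = (n * (volume K).toReal)⁻¹ * (radialFn L u ^ n) := by
      intro u
      have h1 : ψ (g u) = radialFn L u ^ n / radialFn K u ^ n := by
        simp only [hψdef, hgdef]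
        rw [zpow_neg, zpow_natCast, div_pow, inv_div]
      rw [h1]
      have h2 := (hρK u).ne'
      have h3 := (hρL u).ne'
      field_simp
    rw [integral_congr_ae (Filter.Eventually.of_forall hpt), integral_const_mul,
      polar_integral hn hL]
    have h4 : ((n:ℝ) * (volume K).toReal) ≠ 0 := by positivity
    field_simp
  set cst := ((volume K).toReal / (volume L).toReal) ^ ((1:ℝ)/n) with hcst
  have hcst_pos : 0 < cst := Real.rpow_pos_of_pos (div_pos hVK hVL) _
  have hcstpow : cst ^ n = (volume K).toReal / (volume L).toReal := by
    rw [hcst, one_div, Real.rpow_inv_natCast_pow (div_pos hVK hVL).le hn.ne']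
  have hm_pos : 0 < m := ha.trans_le hm_mem.1
  have hmc : cst ≤ m := by
    have h2 : (m ^ n)⁻¹ ≤ (volume L).toReal / (volume K).toReal := by
      have h5 := hJ.trans_eq hI1
      simp only [hψdef] at h5
      rwa [zpow_neg, zpow_natCast] at h5
    have h3 : (volume K).toReal / (volume L).toReal ≤ m ^ n := by
      have h4 := inv_anti₀ (by positivity : (0:ℝ) < (m ^ n)⁻¹) h2
      rwa [inv_inv, inv_div] at h4
    calc cst ≤ (m ^ n) ^ ((1:ℝ)/n) := by
          rw [hcst]
          exact Real.rpow_le_rpow (div_pos hVK hVL).le h3 (by positivity)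
      _ = m := by
          rw [one_div, ← Real.rpow_natCast m n, ← Real.rpow_mul hm_pos.le,
            mul_inv_cancel₀ (by exact_mod_cast hn.ne' : (n:ℝ) ≠ 0), Real.rpow_one]
  set S := {t : ℝ | 0 < t ∧ ∫ u, φ (g u / t) ∂(normDualConical n K) ≤ φ 1} with hSdef
  have hSint : ∀ t : ℝ, (∫ u, φ (radialFn K u / (t * radialFn L u))
        ∂(normDualConical n K)) = ∫ u, φ (g u / t) ∂(normDualConical n K) := by
    intro t
    refine integral_congr_ae (Filter.Eventually.of_forall fun u => ?_)
    simp only [hgdef]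
    exact congrArg φ (div_mul_eq_div_div_swap _ _ _)
  have hOfun : Ofun n φ K L = sInf S := by
    apply congrArg sInf
    ext t
    exact and_congr_right fun _ => by rw [hSint t]
  have hφIoi : ContinuousOn φ (Ioi (0:ℝ)) :=
    ConvexOn.continuousOn isOpen_Ioi (hφconv.subset Ioi_subset_Ici_self (convex_Ioi 0))
  have hφint : ∀ t : ℝ, 0 < t →
      Integrable (fun u => φ (g u / t)) (normDualConical n K) := by
    intro t ht
    refine integrable_sphere (hφIoi.comp_continuous (hgcont.div_const t) fun u => ?_)
    exact div_pos (hgpos u) ht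
  have hbS : b ∈ S := by
    refine ⟨hb, ?_⟩
    have hle : (fun u => φ (g u / b)) ≤ fun _ => φ 1 := by
      intro u
      exact hφmono.monotoneOn (mem_Ici.2 (div_nonneg (hgpos u).le hb.le))
        (mem_Ici.2 zero_le_one) ((div_le_one hb).2 (hub u))
    calc ∫ u, φ (g u / b) ∂(normDualConical n K)
        ≤ ∫ _u, φ 1 ∂(normDualConical n K) :=
          integral_mono (hφint b hb) (integrable_const _) hle
      _ = φ 1 := by simp [measure_univ]
  have hSsub : ∀ t ∈ S, m ≤ t := by
    rintro t ⟨ht, hti⟩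
    have hconv' : ConvexOn ℝ (Icc (a/t) (b/t)) φ :=
      hφconv.subset (fun x hx => le_trans (div_nonneg ha.le ht.le) hx.1) (convex_Icc _ _)
    have hcont' : ContinuousOn φ (Icc (a/t) (b/t)) :=
      hφIoi.mono fun x hx => lt_of_lt_of_le (div_pos ha ht) hx.1
    have hfs : ∀ᵐ u ∂(normDualConical n K), g u / t ∈ Icc (a/t) (b/t) :=
      Filter.Eventually.of_forall fun u =>
        ⟨(div_le_div_iff_of_pos_right ht).2 (hua u), (div_le_div_iff_of_pos_right ht).2 (hub u)⟩
    have hfi : Integrable (fun u => g u / t) (normDualConical n K) := hgi.div_const t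
    have hgi' : Integrable (φ ∘ fun u => g u / t) (normDualConical n K) := hφint t ht
    have hJen := hconv'.map_average_le hcont' isClosed_Icc hfs hfi hgi'
    rw [average_eq_integral, average_eq_integral, integral_div] at hJen
    have hφm : φ (m / t) ≤ φ 1 := le_trans hJen hti
    have h6 := (hφmono.le_iff_le (mem_Ici.2 (div_nonneg hm_pos.le ht.le))
      (mem_Ici.2 zero_le_one)).1 hφm
    exact (div_le_one ht).1 h6
  have forward : sInf S = cst → ∃ c : ℝ, 0 < c ∧ K = c • L := by
    intro heq
    have hm_le : m ≤ sInf S := le_csInf ⟨b, hbS⟩ hSsub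
    have hm_eq : m = cst := le_antisymm (heq ▸ hm_le) hmc
    have hψm_eq : ψ m = ∫ u, ψ (g u) ∂(normDualConical n K) := by
      rw [hI1, hm_eq]
      show cst ^ (-(n:ℤ)) = _
      rw [zpow_neg, zpow_natCast, hcstpow, inv_div]
    have hdich := hψconv.ae_eq_const_or_map_average_lt hψcont isClosed_Icc hgae hgi hψgi
    rw [average_eq_integral, average_eq_integral] at hdich
    rcases hdich with hconst | hlt
    · have hU0 : normDualConical n K {u | g u ≠ m} = 0 := by
        rw [Filter.EventuallyEq, ae_iff] at hconst
        simpa using hconst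
      have hdmeas : Measurable fun u : sphere (0 : EuclideanSpace ℝ (Fin n)) 1 =>
          ENNReal.ofReal (radialFn K u ^ n / (n * (volume K).toReal)) :=
        (((hK.2.2.2).pow n).div_const _).measurable.ennreal_ofReal
      have hSU0 : sphereMeasure n {u | g u ≠ m} = 0 := by
        unfold normDualConical at hU0
        have h7 := (withDensity_apply_eq_zero hdmeas).1 hU0
        have h8 : {x : sphere (0 : EuclideanSpace ℝ (Fin n)) 1 |
            ENNReal.ofReal (radialFn K x ^ n / (n * (volume K).toReal)) ≠ 0}
            ∩ {u | g u ≠ m} = {u | g u ≠ m} := by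
          refine inter_eq_right.2 fun x _hx => ?_
          simp only [mem_setOf_eq, Ne, ENNReal.ofReal_eq_zero, not_le]
          have := hρK x
          positivity
        rwa [h8] at h7
      have hUopen : IsOpen {u | g u ≠ m} := isOpen_compl_singleton.preimage hgcont
      have hUempty : {u | g u ≠ m} = ∅ := by
        by_contra hne
        exact absurd hSU0
          (sphereMeasure_open_pos hn hUopen (nonempty_iff_ne_empty.2 hne)).ne'
      have hall : ∀ u : sphere (0 : EuclideanSpace ℝ (Fin n)) 1, g u = m := by
        intro u
        by_contra hne
        exact absurd hUempty (nonempty_iff_ne_empty.1 ⟨u, hne⟩)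
      refine ⟨cst, hcst_pos, starBody_eq_smul hK hL hcst_pos fun u hu => ?_⟩
      have h9 := hall ⟨u, mem_sphere_zero_iff_norm.2 hu⟩
      simp only [hgdef] at h9
      have h10 : radialFn L u ≠ 0 := (hρL ⟨u, mem_sphere_zero_iff_norm.2 hu⟩).ne'
      rw [div_eq_iff h10] at h9
      rw [h9, hm_eq, mul_comm]
    · exact absurd hψm_eq hlt.ne
  have backward : (∃ c : ℝ, 0 < c ∧ K = c • L) → sInf S = cst := by
    rintro ⟨c₀, hc₀, hKL⟩
    have hdim : Module.finrank ℝ (EuclideanSpace ℝ (Fin n)) = n := finrank_euclideanSpace_fin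
    have hρ : ∀ u : sphere (0 : EuclideanSpace ℝ (Fin n)) 1,
        radialFn K u = c₀ * radialFn L u := by
      intro u
      rw [hKL]
      exact radialFn_smul hL hc₀ (mem_sphere_zero_iff_norm.1 u.2)
    have hVKL : (volume K).toReal = c₀ ^ n * (volume L).toReal := by
      rw [hKL, Measure.addHaar_smul_of_nonneg volume hc₀.le, hdim, ENNReal.toReal_mul,
        ENNReal.toReal_ofReal (by positivity)]
    have hceq : cst = c₀ := by
      rw [hcst, hVKL, mul_div_assoc, div_self hVL.ne', mul_one, one_div,
        Real.pow_rpow_inv_natCast hc₀.le hn.ne']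
    have hgc : ∀ u, g u = c₀ := by
      intro u
      simp only [hgdef]
      rw [hρ u, mul_div_assoc, div_self (hρL u).ne', mul_one]
    have hicst : ∀ t : ℝ, (∫ u, φ (g u / t) ∂(normDualConical n K)) = φ (c₀ / t) := by
      intro t
      rw [integral_congr_ae (Filter.Eventually.of_forall fun u => by rw [hgc u]),
        integral_const]
      simp [measure_univ]
    have hSeq : S = Ici c₀ := by
      ext t
      simp only [hSdef, mem_setOf_eq, mem_Ici]
      constructor
      · rintro ⟨ht, hti⟩
        rw [hicst t] at hti
        have h11 := (hφmono.le_iff_le (mem_Ici.2 (div_nonneg hc₀.le ht.le))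
          (mem_Ici.2 zero_le_one)).1 hti
        exact (div_le_one ht).1 h11
      · intro htc
        have ht : 0 < t := lt_of_lt_of_le hc₀ htc
        refine ⟨ht, ?_⟩
        rw [hicst t]
        exact hφmono.monotoneOn (mem_Ici.2 (div_nonneg hc₀.le ht.le))
          (mem_Ici.2 zero_le_one) ((div_le_one ht).2 htc)
    rw [hSeq, csInf_Ici, hceq]
  rw [hOfun]
  exact ⟨le_csInf ⟨b, hbS⟩ (fun t ht => hmc.trans (hSsub t ht)), forward, backward⟩
end
end

section
/- Let K be a star body about the origin in ℝ^n, φ ∈ Φ, and 1 ≤ p < q < ∞. Then V(L_1 K) ≤ V(L_φ K) ≤ V(L_{φ^p} K) ≤ V(L_{φ^q} K) ≤ V(L_∞ K), where L_∞ K is the minimal-volume origin-symmetric ellipsoid containing K. -/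
open MeasureTheory Metric Set

noncomputable section

/-- An origin-symmetric (nondegenerate) ellipsoid: the image of the closed unit
ball under an invertible linear map. -/
def IsEllipsoid {n : ℕ} (E : Set (EuclideanSpace ℝ (Fin n))) : Prop :=
  ∃ T : EuclideanSpace ℝ (Fin n) ≃ₗ[ℝ] EuclideanSpace ℝ (Fin n),
    E = T '' Metric.closedBall 0 1

/-- `E` is the Orlicz-Legendre ellipsoid `L_ψ K`: an origin-symmetric ellipsoid
with Orlicz norm constraint `‖ρ_K/ρ_E : V_K^*‖_ψ ≤ 1` (equivalently
`O_ψ(K,E) ≤ 1`) of minimal volume among all such ellipsoids. -/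
def IsOrliczLegendre (n : ℕ) (ψ : ℝ → ℝ) (K E : Set (EuclideanSpace ℝ (Fin n))) : Prop :=
  IsEllipsoid E ∧ Ofun n ψ K E ≤ 1 ∧
    ∀ E' : Set (EuclideanSpace ℝ (Fin n)), IsEllipsoid E' → Ofun n ψ K E' ≤ 1 →
      volume E ≤ volume E'

section Aux

open MeasureTheory Metric Set
open scoped ENNReal

variable {n : ℕ}

private lemma bddAbove_starSet {K : Set (EuclideanSpace ℝ (Fin n))} (hKc : IsCompact K)
    {x : EuclideanSpace ℝ (Fin n)} (hx : x ≠ 0) :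
    BddAbove {r : ℝ | 0 ≤ r ∧ r • x ∈ K} := by
  obtain ⟨R, hR⟩ := hKc.isBounded.subset_closedBall 0
  refine ⟨R / ‖x‖, fun r hr => ?_⟩
  have hxpos : 0 < ‖x‖ := norm_pos_iff.2 hx
  have h1 : ‖r • x‖ ≤ R := by simpa [dist_eq_norm] using hR hr.2
  rw [norm_smul, Real.norm_eq_abs, abs_of_nonneg hr.1] at h1
  exact (le_div_iff₀ hxpos).2 h1

private lemma starSet_eq {K : Set (EuclideanSpace ℝ (Fin n))} (hKc : IsCompact K)
    (hK0 : (0 : EuclideanSpace ℝ (Fin n)) ∈ K)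
    (hKs : ∀ x ∈ K, ∀ t : ℝ, t ∈ Icc (0:ℝ) 1 → t • x ∈ K)
    {x : EuclideanSpace ℝ (Fin n)} (hx : x ≠ 0) :
    {r : ℝ | 0 ≤ r ∧ r • x ∈ K} = Icc 0 (radialFn K x) := by
  set s : Set ℝ := {r : ℝ | 0 ≤ r ∧ r • x ∈ K} with hs
  have h0 : (0:ℝ) ∈ s := ⟨le_refl 0, by simpa using hK0⟩
  have hbdd : BddAbove s := bddAbove_starSet hKc hx
  have hclosed : IsClosed s := by
    have h2 : s = Ici (0:ℝ) ∩ (fun r : ℝ => r • x) ⁻¹' K := rfl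
    rw [h2]
    exact isClosed_Ici.inter (hKc.isClosed.preimage (by fun_prop))
  have hmem : radialFn K x ∈ s := hclosed.csSup_mem ⟨0, h0⟩ hbdd
  ext r
  constructor
  · exact fun hr => ⟨hr.1, le_csSup hbdd hr⟩
  · rintro ⟨hr0, hrle⟩
    rcases eq_or_lt_of_le hrle with rfl | hlt
    · exact hmem
    · have hρpos : 0 < radialFn K x := lt_of_le_of_lt hr0 hlt
      have h3 := hKs _ hmem.2 (r / radialFn K x)
        ⟨div_nonneg hr0 hρpos.le, (div_le_one hρpos).2 hrle⟩
      refine ⟨hr0, ?_⟩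
      rwa [smul_smul, div_mul_cancel₀ _ hρpos.ne'] at h3

private lemma radialFn_nonneg {K : Set (EuclideanSpace ℝ (Fin n))} (hKc : IsCompact K)
    (hK0 : (0 : EuclideanSpace ℝ (Fin n)) ∈ K)
    {x : EuclideanSpace ℝ (Fin n)} (hx : x ≠ 0) : 0 ≤ radialFn K x :=
  le_csSup (bddAbove_starSet hKc hx) ⟨le_refl 0, by simpa using hK0⟩

private lemma radialFn_pos {K : Set (EuclideanSpace ℝ (Fin n))} (hKc : IsCompact K)
    (hK0 : (0 : EuclideanSpace ℝ (Fin n)) ∈ interior K)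
    {x : EuclideanSpace ℝ (Fin n)} (hx : ‖x‖ = 1) : 0 < radialFn K x := by
  have hxne : x ≠ 0 := by intro h; rw [h] at hx; simp at hx
  obtain ⟨ε, hε, hball⟩ := Metric.mem_nhds_iff.1 (mem_interior_iff_mem_nhds.1 hK0)
  have hmem : ε / 2 ∈ {r : ℝ | 0 ≤ r ∧ r • x ∈ K} := by
    refine ⟨by positivity, hball ?_⟩
    rw [mem_ball_zero_iff, norm_smul, hx, Real.norm_eq_abs, abs_of_pos (by positivity), mul_one]
    linarith
  exact lt_of_lt_of_le (by positivity) (le_csSup (bddAbove_starSet hKc hxne) hmem)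

/-- membership characterization for positive r -/
private lemma smul_mem_iff_le_radialFn {K : Set (EuclideanSpace ℝ (Fin n))} (hKc : IsCompact K)
    (hK0 : (0 : EuclideanSpace ℝ (Fin n)) ∈ K)
    (hKs : ∀ x ∈ K, ∀ t : ℝ, t ∈ Icc (0:ℝ) 1 → t • x ∈ K)
    {x : EuclideanSpace ℝ (Fin n)} (hx : x ≠ 0) {r : ℝ} (hr : 0 < r) :
    r • x ∈ K ↔ r ≤ radialFn K x := by
  constructor
  · intro h
    have : r ∈ {r : ℝ | 0 ≤ r ∧ r • x ∈ K} := ⟨hr.le, h⟩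
    rw [starSet_eq hKc hK0 hKs hx] at this
    exact this.2
  · intro h
    have : r ∈ Icc 0 (radialFn K x) := ⟨hr.le, h⟩
    rw [← starSet_eq hKc hK0 hKs hx] at this
    exact this.2

private lemma radialFn_ellipsoid {T : EuclideanSpace ℝ (Fin n) ≃ₗ[ℝ] EuclideanSpace ℝ (Fin n)}
    {x : EuclideanSpace ℝ (Fin n)} (hx : x ≠ 0) :
    radialFn (T '' closedBall 0 1) x = ‖T.symm x‖⁻¹ := by
  have hTx : T.symm x ≠ 0 := by
    simp only [ne_eq, LinearEquiv.map_eq_zero_iff]; exact hx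
  have hc : 0 < ‖T.symm x‖ := norm_pos_iff.2 hTx
  have hset : {r : ℝ | 0 ≤ r ∧ r • x ∈ T '' closedBall 0 1} = Icc 0 ‖T.symm x‖⁻¹ := by
    ext r
    simp only [mem_setOf_eq, mem_Icc]
    constructor
    · rintro ⟨hr0, y, hy, hyx⟩
      refine ⟨hr0, ?_⟩
      have : y = r • T.symm x := by
        have hy2 : y = T.symm (r • x) := by rw [← hyx]; simp
        rw [hy2, LinearEquiv.map_smul]
      rw [this, mem_closedBall_zero_iff, norm_smul, Real.norm_eq_abs, abs_of_nonneg hr0] at hy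
      rw [← one_div]
      exact (le_div_iff₀ hc).2 hy
    · rintro ⟨hr0, hrle⟩
      refine ⟨hr0, r • T.symm x, ?_, by simp⟩
      rw [mem_closedBall_zero_iff, norm_smul, Real.norm_eq_abs, abs_of_nonneg hr0]
      calc r * ‖T.symm x‖ ≤ ‖T.symm x‖⁻¹ * ‖T.symm x‖ := by
            exact mul_le_mul_of_nonneg_right hrle hc.le
        _ = 1 := inv_mul_cancel₀ hc.ne'
  rw [radialFn, hset, csSup_Icc (by positivity)]

end Aux
section Aux2

open MeasureTheory Metric Set
open scoped ENNReal

variable {n : ℕ}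

private lemma comap_coe_apply {α} [MeasurableSpace α] {s : Set α} (hs : MeasurableSet s)
    (μ : Measure α) (t : Set s) : μ.comap (↑) t = μ ((↑) '' t) :=
  (MeasurableEmbedding.subtype_coe hs).comap_apply _ _

private lemma volumeIoiPow_singleton (m : ℕ) (x : Ioi (0:ℝ)) :
    Measure.volumeIoiPow m {x} = 0 := by
  rw [Measure.volumeIoiPow, withDensity_apply _ (measurableSet_singleton x)]
  apply setLIntegral_measure_zero
  rw [comap_coe_apply measurableSet_Ioi]
  simp

private lemma volumeIoiPow_le_set (m : ℕ) {c : ℝ} (hc : 0 < c) :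
    Measure.volumeIoiPow m {r : Ioi (0:ℝ) | (r : ℝ) ≤ c} =
      ENNReal.ofReal (c ^ (m + 1) / (m + 1)) := by
  have hset : {r : Ioi (0:ℝ) | (r : ℝ) ≤ c} = Iio ⟨c, hc⟩ ∪ {⟨c, hc⟩} := by
    ext r
    simp only [mem_setOf_eq, mem_union, mem_Iio, mem_singleton_iff, Subtype.ext_iff]
    rw [le_iff_lt_or_eq]
    rfl
  have hdisj : Disjoint (Iio (⟨c, hc⟩ : Ioi (0:ℝ))) {(⟨c, hc⟩ : Ioi (0:ℝ))} := by
    simp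
  rw [hset, measure_union hdisj (measurableSet_singleton _), volumeIoiPow_singleton,
    add_zero, Measure.volumeIoiPow_apply_Iio]

private lemma lintegral_radialFn_pow (hn : 0 < n) {K : Set (EuclideanSpace ℝ (Fin n))}
    (hK : IsStarBody K) :
    ∫⁻ u : sphere (0 : EuclideanSpace ℝ (Fin n)) 1,
        ENNReal.ofReal (radialFn K ↑u ^ n) ∂(sphereMeasure n) = n * volume K := by
  obtain ⟨hKc, hK0i, hKs, hKcont⟩ := hK
  have hK0 : (0 : EuclideanSpace ℝ (Fin n)) ∈ K := interior_subset hK0i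
  haveI : Nontrivial (EuclideanSpace ℝ (Fin n)) := by
    have : Module.finrank ℝ (EuclideanSpace ℝ (Fin n)) = n := finrank_euclideanSpace_fin
    exact Module.nontrivial_of_finrank_pos (by rw [this]; exact hn)
  set μ : Measure (EuclideanSpace ℝ (Fin n)) := volume with hμ
  set h := homeomorphUnitSphereProd (EuclideanSpace ℝ (Fin n)) with hh
  have hKm : MeasurableSet K := hKc.measurableSet
  set A : Set ({(0 : EuclideanSpace ℝ (Fin n))}ᶜ : Set (EuclideanSpace ℝ (Fin n))) :=
    Subtype.val ⁻¹' K with hA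
  have hAm : MeasurableSet A := measurable_subtype_coe hKm
  set s : Set (sphere (0 : EuclideanSpace ℝ (Fin n)) 1 × Ioi (0:ℝ)) := h '' A with hsdef
  have hsm : MeasurableSet s := (h.measurableEmbedding.measurableSet_image).2 hAm
  have hmp := Measure.measurePreserving_homeomorphUnitSphereProd μ
  have h1 : (μ.toSphere.prod (Measure.volumeIoiPow (Module.finrank ℝ (EuclideanSpace ℝ (Fin n)) - 1))) s
      = μ.comap Subtype.val A := by
    rw [← hmp.map_eq, Measure.map_apply h.measurable hsm, hsdef,
      preimage_image_eq _ h.injective]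
  have h2 : μ.comap Subtype.val A = μ K := by
    rw [hA, comap_coe_apply (measurableSet_singleton 0).compl]
    have himg : (Subtype.val '' (Subtype.val ⁻¹' K :
        Set ({(0 : EuclideanSpace ℝ (Fin n))}ᶜ : Set (EuclideanSpace ℝ (Fin n))))) = K \ {0} := by
      rw [Subtype.image_preimage_coe]
      ext y
      simp [mem_diff, and_comm]
    rw [himg, measure_diff_null (by rw [hμ]; exact measure_singleton _)]
  have hfiber : ∀ u : sphere (0 : EuclideanSpace ℝ (Fin n)) 1,
      Prod.mk u ⁻¹' s = {r : Ioi (0:ℝ) | (r : ℝ) ≤ radialFn K ↑u} := by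
    intro u
    have hune : (u : EuclideanSpace ℝ (Fin n)) ≠ 0 :=
      ne_of_mem_sphere u.2 one_ne_zero
    ext r
    simp only [mem_preimage, mem_setOf_eq]
    have hiff : (u, r) ∈ s ↔ h.symm (u, r) ∈ A :=
      ⟨fun ⟨a, ha, hae⟩ => by rw [← hae, Homeomorph.symm_apply_apply]; exact ha,
       fun hmem => ⟨h.symm (u, r), hmem, h.apply_symm_apply _⟩⟩
    rw [hiff]
    show ((h.symm (u, r) : EuclideanSpace ℝ (Fin n)) ∈ K) ↔ _
    have hsy : ((h.symm (u, r) : EuclideanSpace ℝ (Fin n))) = (r : ℝ) • (u : EuclideanSpace ℝ (Fin n)) := by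
      simp [hh]
    rw [hsy, smul_mem_iff_le_radialFn hKc hK0 hKs hune r.2]
  have h3 : (μ.toSphere.prod (Measure.volumeIoiPow (Module.finrank ℝ (EuclideanSpace ℝ (Fin n)) - 1))) s
      = ∫⁻ u, ENNReal.ofReal (radialFn K ↑u ^ n / n) ∂μ.toSphere := by
    rw [Measure.prod_apply hsm]
    refine lintegral_congr fun u => ?_
    rw [hfiber u, volumeIoiPow_le_set _ (radialFn_pos hKc hK0i (mem_sphere_zero_iff_norm.1 u.2)),
      finrank_euclideanSpace_fin, Nat.sub_add_cancel hn, Nat.cast_pred hn]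
    congr 2
    ring
  have key : ∫⁻ u, ENNReal.ofReal (radialFn K ↑u ^ n / n) ∂μ.toSphere = μ K := by
    rw [← h3, h1, h2]
  have hconv : ∀ u : sphere (0 : EuclideanSpace ℝ (Fin n)) 1,
      ENNReal.ofReal (radialFn K ↑u ^ n / n)
        = ENNReal.ofReal (radialFn K ↑u ^ n) * (ENNReal.ofReal n)⁻¹ := by
    intro u
    rw [div_eq_mul_inv, ENNReal.ofReal_mul
      (pow_nonneg (radialFn_nonneg hKc hK0 (ne_of_mem_sphere u.2 one_ne_zero)) n),
      ENNReal.ofReal_inv_of_pos (by exact_mod_cast hn)]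
  rw [funext hconv, lintegral_mul_const' _ _
    (ENNReal.inv_ne_top.2 (by simp [ENNReal.ofReal_pos, hn.ne'])),
    ENNReal.ofReal_natCast] at key
  have hn0 : (n : ℝ≥0∞) ≠ 0 := by exact_mod_cast hn.ne'
  have hnt : (n : ℝ≥0∞) ≠ ⊤ := ENNReal.natCast_ne_top n
  have : sphereMeasure n = μ.toSphere := rfl
  rw [this]
  calc ∫⁻ u, ENNReal.ofReal (radialFn K ↑u ^ n) ∂μ.toSphere
      = (∫⁻ u, ENNReal.ofReal (radialFn K ↑u ^ n) ∂μ.toSphere) * ((n : ℝ≥0∞)⁻¹ * n) := by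
        rw [ENNReal.inv_mul_cancel hn0 hnt, mul_one]
    _ = ((∫⁻ u, ENNReal.ofReal (radialFn K ↑u ^ n) ∂μ.toSphere) * (n : ℝ≥0∞)⁻¹) * n := by ring
    _ = μ K * n := by rw [key]
    _ = n * μ K := mul_comm _ _

end Aux2
section Aux3

open MeasureTheory Metric Set Filter
open scoped ENNReal

variable {n : ℕ}

private lemma normDualConical_isProb (hn : 0 < n) {K : Set (EuclideanSpace ℝ (Fin n))}
    (hK : IsStarBody K) : IsProbabilityMeasure (normDualConical n K) := by
  have hK0 : (0 : EuclideanSpace ℝ (Fin n)) ∈ K := interior_subset hK.2.1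
  have hKpos : 0 < volume K :=
    lt_of_lt_of_le (isOpen_interior.measure_pos volume ⟨0, hK.2.1⟩)
      (measure_mono interior_subset)
  have hKne : volume K ≠ ⊤ := hK.1.measure_lt_top.ne
  have hv : 0 < (volume K).toReal := ENNReal.toReal_pos hKpos.ne' hKne
  have hc : (0:ℝ) < n * (volume K).toReal := by
    have : (0:ℝ) < (n:ℝ) := by exact_mod_cast hn
    positivity
  constructor
  rw [normDualConical, withDensity_apply _ MeasurableSet.univ, Measure.restrict_univ]
  have hconv : ∀ u : sphere (0 : EuclideanSpace ℝ (Fin n)) 1,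
      ENNReal.ofReal (radialFn K ↑u ^ n / (n * (volume K).toReal))
        = ENNReal.ofReal (radialFn K ↑u ^ n) * (ENNReal.ofReal (n * (volume K).toReal))⁻¹ := by
    intro u
    rw [div_eq_mul_inv, ENNReal.ofReal_mul
      (pow_nonneg (radialFn_nonneg hK.1 hK0 (ne_of_mem_sphere u.2 one_ne_zero)) n),
      ENNReal.ofReal_inv_of_pos hc]
  rw [funext hconv, lintegral_mul_const' _ _ (ENNReal.inv_ne_top.2 (by
      simp [ENNReal.ofReal_pos, hc, hn.ne', hv])), lintegral_radialFn_pow hn hK]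
  have heq : ENNReal.ofReal (n * (volume K).toReal) = n * volume K := by
    rw [ENNReal.ofReal_mul (Nat.cast_nonneg n), ENNReal.ofReal_natCast,
      ENNReal.ofReal_toReal hKne]
  rw [heq]
  exact ENNReal.mul_inv_cancel
    (mul_ne_zero (by exact_mod_cast hn.ne') hKpos.ne')
    (ENNReal.mul_ne_top (ENNReal.natCast_ne_top n) hKne)

private lemma cont_integrable {X : Type*} [MeasurableSpace X] [TopologicalSpace X]
    [CompactSpace X] [OpensMeasurableSpace X] [T2Space X] {μ : Measure X} [IsFiniteMeasure μ]
    {g : X → ℝ} (hg : Continuous g) : Integrable g μ := by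
  have := hg.continuousOn.integrableOn_compact (μ := μ) (isCompact_univ (X := X))
  rwa [integrableOn_univ] at this

private lemma jensen_le {α : Type*} [MeasurableSpace α] {μ : Measure α}
    [IsProbabilityMeasure μ] {ψ : ℝ → ℝ} (hconv : ConvexOn ℝ (Ici 0) ψ)
    (hcont : ContinuousOn ψ (Ici 0)) (hmono : StrictMonoOn ψ (Ici 0))
    {g : α → ℝ} (hg : Integrable g μ) (hψg : Integrable (fun a => ψ (g a)) μ)
    (hg0 : ∀ a, 0 ≤ g a) {c : ℝ} (hc : 0 ≤ c)
    (hle : ∫ a, ψ (g a) ∂μ ≤ ψ c) : ∫ a, g a ∂μ ≤ c := by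
  have hj := hconv.map_integral_le hcont isClosed_Ici
    (Eventually.of_forall fun a => mem_Ici.2 (hg0 a)) hg hψg
  by_contra hlt
  push_neg at hlt
  have : ψ c < ψ (∫ a, g a ∂μ) :=
    hmono (mem_Ici.2 hc) (mem_Ici.2 (integral_nonneg hg0)) hlt
  linarith

private lemma convex_mono_continuousOn {ψ : ℝ → ℝ} (hconv : ConvexOn ℝ (Ici 0) ψ)
    (hmono : MonotoneOn ψ (Ici 0)) : ContinuousOn ψ (Ici 0) := by
  intro x hx
  rcases eq_or_lt_of_le (mem_Ici.1 hx) with rfl | hxpos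
  · rw [ContinuousWithinAt]
    have hupper : ∀ᶠ t in nhdsWithin (0:ℝ) (Ici 0), ψ t ≤ (1 - t) * ψ 0 + t * ψ 1 := by
      filter_upwards [inter_mem_nhdsWithin (Ici (0:ℝ)) (Iio_mem_nhds one_pos)] with t ht
      have h1 := hconv.2 (mem_Ici.2 (le_refl (0:ℝ))) (mem_Ici.2 zero_le_one)
        (by linarith [ht.2.out] : (0:ℝ) ≤ 1 - t) ht.1.out (by ring)
      simpa [smul_eq_mul] using h1
    have hlower : ∀ᶠ t in nhdsWithin (0:ℝ) (Ici 0), ψ 0 ≤ ψ t := by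
      filter_upwards [self_mem_nhdsWithin] with t ht
      exact hmono self_mem_Ici ht (mem_Ici.1 ht)
    have hlim : Tendsto (fun t : ℝ => (1 - t) * ψ 0 + t * ψ 1) (nhdsWithin (0:ℝ) (Ici 0))
        (nhds (ψ 0)) := by
      have hcont2 : Continuous fun t : ℝ => (1 - t) * ψ 0 + t * ψ 1 := by continuity
      have h1 := (hcont2.tendsto 0).mono_left
        (nhdsWithin_le_nhds : nhdsWithin (0:ℝ) (Ici 0) ≤ nhds 0)
      simpa using h1
    exact tendsto_of_tendsto_of_tendsto_of_le_of_le' tendsto_const_nhds hlim hlower hupper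
  · have hO : ContinuousOn ψ (Ioi 0) :=
      (hconv.subset Ioi_subset_Ici_self (convex_Ioi 0)).continuousOn isOpen_Ioi
    exact ((hO x hxpos).continuousAt (Ioi_mem_nhds hxpos)).continuousWithinAt

private lemma smul_mem_ellipsoid_iff
    (T : EuclideanSpace ℝ (Fin n) ≃ₗ[ℝ] EuclideanSpace ℝ (Fin n))
    {x : EuclideanSpace ℝ (Fin n)} {r : ℝ} (hr : 0 ≤ r) :
    r • x ∈ T '' closedBall 0 1 ↔ r * ‖T.symm x‖ ≤ 1 := by
  constructor
  · rintro ⟨y, hy, hyx⟩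
    have hyeq : y = r • T.symm x := by
      have hy2 : y = T.symm (r • x) := by rw [← hyx]; simp
      rw [hy2, LinearEquiv.map_smul]
    rw [hyeq, mem_closedBall_zero_iff, norm_smul, Real.norm_eq_abs, abs_of_nonneg hr] at hy
    exact hy
  · intro hle
    refine ⟨r • T.symm x, ?_, by simp⟩
    rw [mem_closedBall_zero_iff, norm_smul, Real.norm_eq_abs, abs_of_nonneg hr]
    exact hle

end Aux3
section Aux4

open MeasureTheory Metric Set
open scoped ENNReal

variable {n : ℕ}

private lemma sphere_nonempty' (hn : 0 < n) :
    Nonempty (sphere (0 : EuclideanSpace ℝ (Fin n)) 1) := by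
  refine ⟨⟨EuclideanSpace.single ⟨0, hn⟩ (1:ℝ), ?_⟩⟩
  rw [mem_sphere_zero_iff_norm, EuclideanSpace.norm_single]
  norm_num

private lemma radialFn_smul_mem {K : Set (EuclideanSpace ℝ (Fin n))} (hKc : IsCompact K)
    (hK0 : (0 : EuclideanSpace ℝ (Fin n)) ∈ K)
    (hKs : ∀ x ∈ K, ∀ t : ℝ, t ∈ Icc (0:ℝ) 1 → t • x ∈ K)
    {x : EuclideanSpace ℝ (Fin n)} (hx : x ≠ 0) : radialFn K x • x ∈ K := by
  have h : radialFn K x ∈ Icc 0 (radialFn K x) := ⟨radialFn_nonneg hKc hK0 hx, le_rfl⟩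
  rw [← starSet_eq hKc hK0 hKs hx] at h
  exact h.2

private lemma Ofun_le_trans (hn : 0 < n) {K : Set (EuclideanSpace ℝ (Fin n))}
    (hK : IsStarBody K) {E : Set (EuclideanSpace ℝ (Fin n))} (hE : IsEllipsoid E)
    {ψ₁ ψ₂ : ℝ → ℝ} (hψ₂mono : MonotoneOn ψ₂ (Ici 0)) (hψ₂1 : 0 ≤ ψ₂ 1)
    (himp : ∀ g : sphere (0 : EuclideanSpace ℝ (Fin n)) 1 → ℝ, Continuous g →
      (∀ u, 0 ≤ g u) →
      ∫ u, ψ₂ (g u) ∂(normDualConical n K) ≤ ψ₂ 1 →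
      ∫ u, ψ₁ (g u) ∂(normDualConical n K) ≤ ψ₁ 1)
    (h2 : Ofun n ψ₂ K E ≤ 1) : Ofun n ψ₁ K E ≤ 1 := by
  haveI := normDualConical_isProb hn hK
  haveI := sphere_nonempty' hn
  obtain ⟨T, rfl⟩ := hE
  unfold Ofun at h2 ⊢
  have hρEeq : ∀ u : sphere (0 : EuclideanSpace ℝ (Fin n)) 1,
      radialFn (T '' closedBall 0 1) ↑u = ‖T.symm ↑u‖⁻¹ := fun u =>
    radialFn_ellipsoid (ne_of_mem_sphere u.2 one_ne_zero)
  have hTc : Continuous fun x : EuclideanSpace ℝ (Fin n) => T.symm x :=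
    T.symm.toLinearMap.continuous_of_finiteDimensional
  have hTne : ∀ u : sphere (0 : EuclideanSpace ℝ (Fin n)) 1,
      ‖T.symm ↑u‖ ≠ 0 := fun u => by
    simp only [ne_eq, norm_eq_zero, LinearEquiv.map_eq_zero_iff]
    exact ne_of_mem_sphere u.2 one_ne_zero
  have hρEc : Continuous fun u : sphere (0 : EuclideanSpace ℝ (Fin n)) 1 =>
      radialFn (T '' closedBall 0 1) ↑u := by
    have heq : (fun u : sphere (0 : EuclideanSpace ℝ (Fin n)) 1 =>
        radialFn (T '' closedBall 0 1) ↑u)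
        = fun u : sphere (0 : EuclideanSpace ℝ (Fin n)) 1 =>
          ‖T.symm (u : EuclideanSpace ℝ (Fin n))‖⁻¹ := funext hρEeq
    rw [heq]
    exact ((hTc.comp continuous_subtype_val).norm).inv₀ hTne
  have hρEpos : ∀ u : sphere (0 : EuclideanSpace ℝ (Fin n)) 1,
      0 < radialFn (T '' closedBall 0 1) ↑u := fun u => by
    rw [hρEeq u]
    exact inv_pos.2 ((hTne u).symm.lt_of_le (norm_nonneg _))
  have hρKc : Continuous fun u : sphere (0 : EuclideanSpace ℝ (Fin n)) 1 =>
      radialFn K ↑u := hK.2.2.2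
  have hρK0 : ∀ u : sphere (0 : EuclideanSpace ℝ (Fin n)) 1, 0 ≤ radialFn K ↑u := fun u =>
    radialFn_nonneg hK.1 (interior_subset hK.2.1) (ne_of_mem_sphere u.2 one_ne_zero)
  have hfc : ∀ t : ℝ, 0 < t → Continuous (fun u : sphere (0 : EuclideanSpace ℝ (Fin n)) 1 =>
      radialFn K ↑u / (t * radialFn (T '' closedBall 0 1) ↑u)) := fun t ht =>
    hρKc.div (continuous_const.mul hρEc) fun u => (mul_pos ht (hρEpos u)).ne'
  have hf0 : ∀ t : ℝ, 0 < t → ∀ u : sphere (0 : EuclideanSpace ℝ (Fin n)) 1,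
      0 ≤ radialFn K ↑u / (t * radialFn (T '' closedBall 0 1) ↑u) := fun t ht u =>
    div_nonneg (hρK0 u) (mul_pos ht (hρEpos u)).le
  have hsub : {t : ℝ | 0 < t ∧ ∫ u, ψ₂ (radialFn K ↑u /
        (t * radialFn (T '' closedBall 0 1) ↑u)) ∂(normDualConical n K) ≤ ψ₂ 1}
      ⊆ {t : ℝ | 0 < t ∧ ∫ u, ψ₁ (radialFn K ↑u /
        (t * radialFn (T '' closedBall 0 1) ↑u)) ∂(normDualConical n K) ≤ ψ₁ 1} :=
    fun t ht => ⟨ht.1, himp _ (hfc t ht.1) (hf0 t ht.1) ht.2⟩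
  obtain ⟨u₀, -, hu₀⟩ := isCompact_univ.exists_isMaxOn univ_nonempty
    ((hρKc.div hρEc fun u => (hρEpos u).ne').continuousOn)
  set M : ℝ := max (radialFn K ↑u₀ / radialFn (T '' closedBall 0 1) ↑u₀) 1 with hM
  have hMpos : 0 < M := lt_of_lt_of_le one_pos (le_max_right _ _)
  have hfle : ∀ u : sphere (0 : EuclideanSpace ℝ (Fin n)) 1,
      radialFn K ↑u / (M * radialFn (T '' closedBall 0 1) ↑u) ≤ 1 := by
    intro u
    rw [mul_comm, ← div_div, div_le_one hMpos]
    exact le_trans (hu₀ (mem_univ u)) (le_max_left _ _)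
  have hMmem : M ∈ {t : ℝ | 0 < t ∧ ∫ u, ψ₂ (radialFn K ↑u /
      (t * radialFn (T '' closedBall 0 1) ↑u)) ∂(normDualConical n K) ≤ ψ₂ 1} := by
    refine ⟨hMpos, ?_⟩
    by_cases hInt : Integrable (fun u : sphere (0 : EuclideanSpace ℝ (Fin n)) 1 =>
        ψ₂ (radialFn K ↑u / (M * radialFn (T '' closedBall 0 1) ↑u))) (normDualConical n K)
    · calc ∫ u, ψ₂ (radialFn K ↑u /
            (M * radialFn (T '' closedBall 0 1) ↑u)) ∂(normDualConical n K)
          ≤ ∫ _u, ψ₂ 1 ∂(normDualConical n K) := by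
            refine integral_mono hInt (integrable_const _) fun u => ?_
            exact hψ₂mono (mem_Ici.2 (hf0 M hMpos u)) (mem_Ici.2 zero_le_one) (hfle u)
        _ = ψ₂ 1 := by simp
    · rw [integral_undef hInt]
      exact hψ₂1
  exact le_trans (csInf_le_csInf ⟨0, fun t ht => ht.1.le⟩ ⟨M, hMmem⟩ hsub) h2

end Aux4
/-- Let `K` be a star body about the origin, `φ ∈ Φ`, and
`1 ≤ p < q < ∞`.  Then
`V(L_1 K) ≤ V(L_φ K) ≤ V(L_{φ^p} K) ≤ V(L_{φ^q} K) ≤ V(L_∞ K)`, where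
`L_∞ K` is the minimal-volume origin-symmetric ellipsoid containing `K`. -/
theorem orliczLegendre_volume_chain
    (n : ℕ) (hn : 0 < n) (K : Set (EuclideanSpace ℝ (Fin n))) (hK : IsStarBody K)
    (φ : ℝ → ℝ)
    (hφconv : ConvexOn ℝ (Ici (0 : ℝ)) φ)
    (hφmono : StrictMonoOn φ (Ici (0 : ℝ)))
    (hφ0 : φ 0 = 0)
    (p q : ℝ) (hp : 1 ≤ p) (hpq : p < q)
    (E₁ Eφ Ep Eq Einf : Set (EuclideanSpace ℝ (Fin n)))
    (hE₁ : IsOrliczLegendre n (fun t => t) K E₁)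
    (hEφ : IsOrliczLegendre n φ K Eφ)
    (hEp : IsOrliczLegendre n (fun t => φ t ^ p) K Ep)
    (hEq : IsOrliczLegendre n (fun t => φ t ^ q) K Eq)
    (hEinf : IsEllipsoid Einf ∧ K ⊆ Einf ∧
      ∀ E' : Set (EuclideanSpace ℝ (Fin n)), IsEllipsoid E' → K ⊆ E' →
        volume Einf ≤ volume E') :
    volume E₁ ≤ volume Eφ ∧ volume Eφ ≤ volume Ep ∧
      volume Ep ≤ volume Eq ∧ volume Eq ≤ volume Einf := by
  have hq1 : 1 ≤ q := hp.trans hpq.le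
  have hp0 : 0 < p := lt_of_lt_of_le one_pos hp
  have hq0 : 0 < q := lt_of_lt_of_le one_pos hq1
  haveI hprob := normDualConical_isProb hn hK
  have hK0 : (0 : EuclideanSpace ℝ (Fin n)) ∈ K := interior_subset hK.2.1
  have hφmonoOn : MonotoneOn φ (Ici 0) := hφmono.monotoneOn
  have hφcont : ContinuousOn φ (Ici 0) := convex_mono_continuousOn hφconv hφmonoOn
  have hφnn : ∀ x : ℝ, 0 ≤ x → 0 ≤ φ x := fun x hx => by
    rw [← hφ0]; exact hφmonoOn self_mem_Ici (mem_Ici.2 hx) hx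
  have hφ1 : 0 ≤ φ 1 := hφnn 1 zero_le_one
  -- monotonicity of the power-composed functions
  have hmono_p : MonotoneOn (fun t => φ t ^ p) (Ici 0) := fun x hx y hy hxy =>
    Real.rpow_le_rpow (hφnn x hx) (hφmonoOn hx hy hxy) hp0.le
  have hmono_q : MonotoneOn (fun t => φ t ^ q) (Ici 0) := fun x hx y hy hxy =>
    Real.rpow_le_rpow (hφnn x hx) (hφmonoOn hx hy hxy) hq0.le
  -- implication 1 : φ ⇒ id
  have himp1 : ∀ g : sphere (0 : EuclideanSpace ℝ (Fin n)) 1 → ℝ, Continuous g →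
      (∀ u, 0 ≤ g u) → ∫ u, φ (g u) ∂(normDualConical n K) ≤ φ 1 →
      ∫ u, g u ∂(normDualConical n K) ≤ (1:ℝ) := by
    intro g hgc hg0 hle
    have hφgc : Continuous fun u => φ (g u) :=
      hφcont.comp_continuous hgc fun u => mem_Ici.2 (hg0 u)
    exact jensen_le hφconv hφcont hφmono (cont_integrable hgc)
      (cont_integrable hφgc) hg0 zero_le_one hle
  -- implication 2 : φ^p ⇒ φ
  have himp2 : ∀ g : sphere (0 : EuclideanSpace ℝ (Fin n)) 1 → ℝ, Continuous g →
      (∀ u, 0 ≤ g u) → ∫ u, φ (g u) ^ p ∂(normDualConical n K) ≤ φ 1 ^ p →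
      ∫ u, φ (g u) ∂(normDualConical n K) ≤ φ 1 := by
    intro g hgc hg0 hle
    have hφgc : Continuous fun u => φ (g u) :=
      hφcont.comp_continuous hgc fun u => mem_Ici.2 (hg0 u)
    have hpowc : Continuous fun x : ℝ => x ^ p := Real.continuous_rpow_const hp0.le
    exact jensen_le (convexOn_rpow hp) hpowc.continuousOn
      (fun x hx y _ hxy => Real.rpow_lt_rpow hx hxy hp0)
      (cont_integrable hφgc) (cont_integrable (hpowc.comp hφgc))
      (fun u => hφnn _ (hg0 u)) hφ1 hle
  -- implication 3 : φ^q ⇒ φ^p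
  have himp3 : ∀ g : sphere (0 : EuclideanSpace ℝ (Fin n)) 1 → ℝ, Continuous g →
      (∀ u, 0 ≤ g u) → ∫ u, φ (g u) ^ q ∂(normDualConical n K) ≤ φ 1 ^ q →
      ∫ u, φ (g u) ^ p ∂(normDualConical n K) ≤ φ 1 ^ p := by
    intro g hgc hg0 hle
    have hφgc : Continuous fun u => φ (g u) :=
      hφcont.comp_continuous hgc fun u => mem_Ici.2 (hg0 u)
    set r : ℝ := q / p with hrdef
    have hr1 : 1 ≤ r := (one_le_div hp0).2 hpq.le
    have hr0 : 0 < r := lt_of_lt_of_le one_pos hr1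
    have hpr : p * r = q := by rw [hrdef]; field_simp
    have key : ∀ x : ℝ, 0 ≤ x → (x ^ p) ^ r = x ^ q := fun x hx => by
      rw [← Real.rpow_mul hx, hpr]
    have hgp_cont : Continuous fun u => φ (g u) ^ p :=
      (Real.continuous_rpow_const hp0.le).comp hφgc
    have hle' : ∫ u, (φ (g u) ^ p) ^ r ∂(normDualConical n K) ≤ (φ 1 ^ p) ^ r := by
      have heq : (fun u : sphere (0 : EuclideanSpace ℝ (Fin n)) 1 => (φ (g u) ^ p) ^ r)
          = fun u => φ (g u) ^ q := funext fun u => key _ (hφnn _ (hg0 u))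
      rw [heq, key _ hφ1]
      exact hle
    exact jensen_le (convexOn_rpow hr1)
      ((Real.continuous_rpow_const hr0.le).continuousOn)
      (fun x hx y _ hxy => Real.rpow_lt_rpow hx hxy hr0)
      (cont_integrable hgp_cont)
      (cont_integrable ((Real.continuous_rpow_const hr0.le).comp hgp_cont))
      (fun u => Real.rpow_nonneg (hφnn _ (hg0 u)) p)
      (Real.rpow_nonneg hφ1 p) hle'
  obtain ⟨hEinfE, hKsub, hEinfmin⟩ := hEinf
  refine ⟨?_, ?_, ?_, ?_⟩
  · exact hE₁.2.2 Eφ hEφ.1 (Ofun_le_trans hn hK hEφ.1 hφmonoOn hφ1 himp1 hEφ.2.1)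
  · exact hEφ.2.2 Ep hEp.1 (Ofun_le_trans hn hK hEp.1 hmono_p (Real.rpow_nonneg hφ1 p)
      himp2 hEp.2.1)
  · exact hEp.2.2 Eq hEq.1 (Ofun_le_trans hn hK hEq.1 hmono_q (Real.rpow_nonneg hφ1 q)
      himp3 hEq.2.1)
  · -- V(L_{φ^q} K) ≤ V(L_∞ K)
    refine hEq.2.2 Einf hEinfE ?_
    obtain ⟨T, rfl⟩ := hEinfE
    unfold Ofun
    refine csInf_le ⟨0, fun t ht => ht.1.le⟩ ⟨one_pos, ?_⟩
    have hρEeq : ∀ u : sphere (0 : EuclideanSpace ℝ (Fin n)) 1,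
        radialFn (T '' closedBall 0 1) ↑u = ‖T.symm ↑u‖⁻¹ := fun u =>
      radialFn_ellipsoid (ne_of_mem_sphere u.2 one_ne_zero)
    have hTne : ∀ u : sphere (0 : EuclideanSpace ℝ (Fin n)) 1, ‖T.symm ↑u‖ ≠ 0 := fun u => by
      simp only [ne_eq, norm_eq_zero, LinearEquiv.map_eq_zero_iff]
      exact ne_of_mem_sphere u.2 one_ne_zero
    have hρEpos : ∀ u : sphere (0 : EuclideanSpace ℝ (Fin n)) 1,
        0 < radialFn (T '' closedBall 0 1) ↑u := fun u => by
      rw [hρEeq u]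
      exact inv_pos.2 ((hTne u).symm.lt_of_le (norm_nonneg _))
    have hρK0 : ∀ u : sphere (0 : EuclideanSpace ℝ (Fin n)) 1, 0 ≤ radialFn K ↑u := fun u =>
      radialFn_nonneg hK.1 hK0 (ne_of_mem_sphere u.2 one_ne_zero)
    have hfle : ∀ u : sphere (0 : EuclideanSpace ℝ (Fin n)) 1,
        radialFn K ↑u / (1 * radialFn (T '' closedBall 0 1) ↑u) ≤ 1 := by
      intro u
      have hune : (u : EuclideanSpace ℝ (Fin n)) ≠ 0 := ne_of_mem_sphere u.2 one_ne_zero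
      have h1 : radialFn K ↑u • (u : EuclideanSpace ℝ (Fin n)) ∈ T '' closedBall 0 1 :=
        hKsub (radialFn_smul_mem hK.1 hK0 hK.2.2.1 hune)
      have h2 : radialFn K ↑u * ‖T.symm ↑u‖ ≤ 1 := (smul_mem_ellipsoid_iff T (hρK0 u)).1 h1
      have h3 : radialFn K ↑u ≤ radialFn (T '' closedBall 0 1) ↑u := by
        rw [hρEeq u, ← one_div, le_div_iff₀ ((hTne u).symm.lt_of_le (norm_nonneg _))]
        exact h2
      rw [one_mul, div_le_one (hρEpos u)]
      exact h3
    have hptwise : ∀ u : sphere (0 : EuclideanSpace ℝ (Fin n)) 1,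
        φ (radialFn K ↑u / (1 * radialFn (T '' closedBall 0 1) ↑u)) ^ q ≤ φ 1 ^ q := by
      intro u
      have hf0 : 0 ≤ radialFn K ↑u / (1 * radialFn (T '' closedBall 0 1) ↑u) :=
        div_nonneg (hρK0 u) (mul_nonneg zero_le_one (hρEpos u).le)
      exact Real.rpow_le_rpow (hφnn _ hf0)
        (hφmonoOn (mem_Ici.2 hf0) (mem_Ici.2 zero_le_one) (hfle u)) hq0.le
    by_cases hInt : Integrable (fun u : sphere (0 : EuclideanSpace ℝ (Fin n)) 1 =>
        φ (radialFn K ↑u / (1 * radialFn (T '' closedBall 0 1) ↑u)) ^ q) (normDualConical n K)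
    · calc ∫ u, φ (radialFn K ↑u / (1 * radialFn (T '' closedBall 0 1) ↑u)) ^ q
            ∂(normDualConical n K)
          ≤ ∫ _u, φ 1 ^ q ∂(normDualConical n K) :=
            integral_mono hInt (integrable_const _) hptwise
        _ = φ 1 ^ q := by simp
    · rw [integral_undef hInt]
      exact Real.rpow_nonneg hφ1 q
end
end
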